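/- The cocycle A_{ση} (equal to diag(η^{-1},η) when x_0 = 0 and diag(σ,σ^{-1}) when x_0 = 1, with 1 < η < σ) is α-fiber-bunched if and only if σ² < 2^α, i.e., there exists N > 0 such that ‖A^N(x)‖·‖(A^N(x))^{-1}‖ < 2^{αN} for all x ∈ M if and only if σ² < 2^α. -/

import Mathlib

open Real Filter MeasureTheory

/-- The space `M = {0,1}^ℤ` of bi-infinite binary sequences. -/
abbrev Mspace : Type := ℤ → Bool

/-- `N(x,y) = sup {N ≥ 0 : x_n = y_n for all |n| < N}`. -/
noncomputable def sep (x y : Mspace) : ℕ := sSup {N : ℕ | ∀ n : ℤ, |n| < (N : ℤ) → x n = y n}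

open scoped Classical in
/-- The metric `d(x,y) = 2^{-N(x,y)}` (with `d(x,x) = 0`, as `N(x,x) = ∞`). -/
noncomputable def dd (x y : Mspace) : ℝ := if x = y then 0 else (2 : ℝ) ^ (-(sep x y : ℤ))

/-- The left shift map on `M`. -/
def shift (x : Mspace) : Mspace := fun n => x (n + 1)

/-- The Euclidean operator norm of a `2 × 2` real matrix. -/
noncomputable def opn (M : Matrix (Fin 2) (Fin 2) ℝ) : ℝ :=
  ‖Matrix.toEuclideanCLM (𝕜 := ℝ) M‖

abbrev SL2 : Type := Matrix.SpecialLinearGroup (Fin 2) ℝ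

/-- The generator `A_{ση}` of the locally constant cocycle. -/
noncomputable def Ase (σ η : ℝ) (x : Mspace) : Matrix (Fin 2) (Fin 2) ℝ :=
  if x 0 then !![σ, 0; 0, σ⁻¹] else !![η⁻¹, 0; 0, η]

/-- The cocycle iterates `A^n(x) = A(f^{n-1}(x)) ⋯ A(x)`. -/
noncomputable def AseIter (σ η : ℝ) : ℕ → Mspace → Matrix (Fin 2) (Fin 2) ℝ
  | 0, _ => 1
  | n + 1, x => Ase σ η (shift^[n] x) * AseIter σ η n x

lemma opn_diag (a b : ℝ) (ha : 0 ≤ a) (hb : 0 ≤ b) : opn !![a,0;0,b] = max a b := by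
  set T := Matrix.toEuclideanCLM (𝕜 := ℝ) !![a,0;0,b] with hTdef
  have hT : ∀ x : EuclideanSpace ℝ (Fin 2),
      T x = (WithLp.equiv 2 _).symm ![a * x 0, b * x 1] := by
    intro x
    apply (WithLp.equiv 2 _).injective
    rw [hTdef, WithLp.equiv_apply, Matrix.ofLp_toEuclideanCLM]
    ext i
    fin_cases i <;> simp [Matrix.mulVec, dotProduct, Fin.sum_univ_two]
  have hnorm : ∀ x : EuclideanSpace ℝ (Fin 2),
      ‖T x‖ = Real.sqrt ((a * x 0)^2 + (b * x 1)^2) := by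
    intro x
    rw [hT, EuclideanSpace.norm_eq]
    simp [Fin.sum_univ_two, sq_abs]
  refine le_antisymm ?_ ?_
  · apply ContinuousLinearMap.opNorm_le_bound _ (le_max_of_le_left ha)
    intro x
    rw [hnorm, EuclideanSpace.norm_eq]
    simp only [Fin.sum_univ_two, Real.norm_eq_abs, sq_abs]
    rw [← Real.sqrt_sq (le_max_of_le_left ha), ← Real.sqrt_mul (sq_nonneg _)]
    apply Real.sqrt_le_sqrt
    have h1 : a ≤ max a b := le_max_left a b
    have h2 : b ≤ max a b := le_max_right a b
    nlinarith [mul_le_mul_of_nonneg_right (pow_le_pow_left₀ ha h1 2) (sq_nonneg (x 0)),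
      mul_le_mul_of_nonneg_right (pow_le_pow_left₀ hb h2 2) (sq_nonneg (x 1))]
  · rw [max_le_iff]
    constructor
    · calc a = ‖T (EuclideanSpace.single 0 1)‖ := by
            rw [hnorm]; simp [EuclideanSpace.single_apply, ha]
        _ ≤ ‖T‖ * ‖EuclideanSpace.single (0:Fin 2) (1:ℝ)‖ := T.le_opNorm _
        _ = ‖T‖ := by simp [EuclideanSpace.norm_single]
    · calc b = ‖T (EuclideanSpace.single 1 1)‖ := by
            rw [hnorm]; simp [EuclideanSpace.single_apply, hb]
        _ ≤ ‖T‖ * ‖EuclideanSpace.single (1:Fin 2) (1:ℝ)‖ := T.le_opNorm _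
        _ = ‖T‖ := by simp [EuclideanSpace.norm_single]

lemma diag_inv (a b : ℝ) (ha : a ≠ 0) (hb : b ≠ 0) :
    (!![a,0;0,b] : Matrix (Fin 2) (Fin 2) ℝ)⁻¹ = !![a⁻¹,0;0,b⁻¹] := by
  apply Matrix.inv_eq_right_inv
  rw [Matrix.mul_fin_two, Matrix.one_fin_two]
  norm_num [mul_inv_cancel₀ ha, mul_inv_cancel₀ hb]

lemma AseIter_const_true (σ η : ℝ) (N : ℕ) :
    AseIter σ η N (fun _ => true) = !![σ ^ N, 0; 0, σ⁻¹ ^ N] := by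
  induction N with
  | zero => simp [AseIter, Matrix.one_fin_two]
  | succ n ih =>
    have hfix : shift^[n] (fun _ => true) = (fun _ => true) :=
      Function.iterate_fixed rfl n
    rw [AseIter, ih, hfix]
    simp only [Ase, ite_true]
    rw [Matrix.mul_fin_two]
    norm_num [pow_succ, mul_comm]

/-- the cocycle `A_{ση}` (with `1 < η < σ`) is `α`-fiber-bunched iff
`σ² < 2^α`. -/
theorem stmt19 (σ η α : ℝ) (hη : 1 < η) (hησ : η < σ) (hα : 0 < α) :
    (∃ N : ℕ, 0 < N ∧ ∀ x : Mspace,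
        opn (AseIter σ η N x) * opn ((AseIter σ η N x)⁻¹) < (2 : ℝ) ^ (α * N)) ↔
      σ ^ 2 < (2 : ℝ) ^ α := by
  have hσ1 : 1 < σ := hη.trans hησ
  have hσ0 : 0 < σ := lt_trans one_pos hσ1
  have hη0 : 0 < η := lt_trans one_pos hη
  constructor
  · rintro ⟨N, hN, h⟩
    have hx := h (fun _ => true)
    rw [AseIter_const_true] at hx
    have hinvmat : (!![σ ^ N, 0; 0, σ⁻¹ ^ N] : Matrix (Fin 2) (Fin 2) ℝ)⁻¹ =
        !![σ⁻¹ ^ N, 0; 0, σ ^ N] := by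
      rw [diag_inv _ _ (pow_ne_zero _ hσ0.ne') (pow_ne_zero _ (inv_pos.mpr hσ0).ne'),
        ← inv_pow, ← inv_pow, inv_inv]
    rw [hinvmat, opn_diag _ _ (pow_nonneg hσ0.le _) (pow_nonneg (inv_pos.mpr hσ0).le _),
        opn_diag _ _ (pow_nonneg (inv_pos.mpr hσ0).le _) (pow_nonneg hσ0.le _)] at hx
    have hinv : σ⁻¹ ^ N ≤ σ ^ N :=
      pow_le_pow_left₀ (inv_pos.mpr hσ0).le ((inv_le_one₀ hσ0).mpr hσ1.le |>.trans hσ1.le) N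
    rw [max_eq_left hinv, max_eq_right hinv] at hx
    have key : (σ ^ 2) ^ N < ((2:ℝ) ^ α) ^ N := by
      rw [← pow_mul, mul_comm 2 N, pow_mul]
      calc (σ ^ N) ^ 2 = σ ^ N * σ ^ N := pow_two (σ ^ N)
        _ < (2:ℝ) ^ (α * N) := hx
        _ = ((2:ℝ) ^ α) ^ N := by
            rw [← Real.rpow_natCast ((2:ℝ)^α) N, ← Real.rpow_mul (by norm_num)]
    exact lt_of_pow_lt_pow_left₀ N (Real.rpow_nonneg (by norm_num) α) key
  · intro hσ2
    refine ⟨1, one_pos, fun x => ?_⟩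
    have h1 : AseIter σ η 1 x = Ase σ η x := by
      simp [AseIter]
    rw [h1]
    have hα1 : (2:ℝ) ^ (α * (1:ℕ)) = (2:ℝ) ^ α := by norm_num
    rw [hα1]
    by_cases hx0 : x 0
    · rw [Ase, if_pos hx0, diag_inv _ _ hσ0.ne' (inv_pos.mpr hσ0).ne', inv_inv,
        opn_diag _ _ hσ0.le (inv_pos.mpr hσ0).le, opn_diag _ _ (inv_pos.mpr hσ0).le hσ0.le]
      have : σ⁻¹ ≤ σ := ((inv_le_one₀ hσ0).mpr hσ1.le).trans hσ1.le
      rw [max_eq_left this, max_eq_right this, ← sq]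
      exact hσ2
    · rw [Ase, if_neg (by simpa using hx0), diag_inv _ _ (inv_pos.mpr hη0).ne' hη0.ne', inv_inv,
        opn_diag _ _ (inv_pos.mpr hη0).le hη0.le, opn_diag _ _ hη0.le (inv_pos.mpr hη0).le]
      have : η⁻¹ ≤ η := ((inv_le_one₀ hη0).mpr hη.le).trans hη.le
      rw [max_eq_right this, max_eq_left this, ← sq]
      calc η ^ 2 < σ ^ 2 := by nlinarith
        _ < _ := hσ2
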